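/- Let k, s, m, n be positive integers with k < m ≤ n and gcd(s,n) = 1, and let U be an m-dimensional K-subspace of F. Let E be the largest intermediate field of F/K such that U is an E-subspace of F. Then the middle nucleus of π_U(G_{k,s}) is N_m(π_U(G_{k,s})) = {cX : c ∈ E}. -/

import Mathlib

open Polynomial Module Finset

/-- The set `G_{k,s}` of linearized polynomials
`a₀ X + a₁ X^{q^s} + ⋯ + a_{k-1} X^{q^{s(k-1)}}` with `a₀, …, a_{k-1} ∈ F`. -/
def Gks (q k s : ℕ) (F : Type*) [Field F] : Set (Polynomial F) :=
  {p | ∃ a : Fin k → F, p = ∑ i : Fin k, Polynomial.C (a i) * Polynomial.X ^ q ^ (s * (i : ℕ))}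

/-- The middle nucleus `N_m(π_U(C)) = {ψ ∈ End_K(U) : π_U(f ∘ ψ) ∈ π_U(C) ∀ f ∈ C}`
of the projection to `U` of a set `C` of (linearized) polynomials. -/
def middleNucleus {K F : Type*} [Field K] [Field F] [Algebra K F]
    (U : Submodule K F) (C : Set (Polynomial F)) : Set (Module.End K U) :=
  {ψ | ∀ f ∈ C, ∃ g ∈ C, ∀ x : U, f.eval ((ψ x : F)) = g.eval (x : F)}

/-- Kernel bound for σ-twisted linearized maps: a nonzero twisted polynomial of degree `D`
has kernel of dimension at most `D` over the fixed field `K` of `σ`. -/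
lemma twisted_kernel_bound {K F : Type*} [Field K] [Field F] [Algebra K F]
    [FiniteDimensional K F]
    (σ : F →+* F) (hfix : ∀ x : F, σ x = x → x ∈ Set.range (algebraMap K F))
    (hfix' : ∀ a : K, σ (algebraMap K F a) = algebraMap K F a) :
    ∀ (D : ℕ) (c : ℕ → F), c D ≠ 0 →
      ∀ V : Submodule K F, (∀ x ∈ V, ∑ i ∈ Finset.range (D + 1), c i * σ^[i] x = 0) →
        Module.finrank K V ≤ D := by
  have hσsmul : ∀ (a : K) (x : F), σ (a • x) = a • σ x := by
    intro a x
    rw [Algebra.smul_def, map_mul, hfix', Algebra.smul_def]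
  set σa : F →ₐ[K] F := AlgHom.mk' σ hσsmul with hσa
  have hitmul : ∀ (i : ℕ) (x y : F), σ^[i] (x * y) = σ^[i] x * σ^[i] y := by
    intro i
    induction i with
    | zero => intro x y; simp
    | succ i ih => intro x y; rw [Function.iterate_succ_apply, map_mul, ih,
        ← Function.iterate_succ_apply, ← Function.iterate_succ_apply]
  have hitsub : ∀ (i : ℕ) (x y : F), σ^[i] (x - y) = σ^[i] x - σ^[i] y := by
    intro i
    induction i with
    | zero => intro x y; simp
    | succ i ih => intro x y; rw [Function.iterate_succ_apply, map_sub, ih,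
        ← Function.iterate_succ_apply, ← Function.iterate_succ_apply]
  have hitone : ∀ i : ℕ, σ^[i] (1 : F) = 1 := by
    intro i
    induction i with
    | zero => simp
    | succ i ih => rw [Function.iterate_succ_apply, map_one, ih]
  have hitne : ∀ (i : ℕ) (x : F), x ≠ 0 → σ^[i] x ≠ 0 := by
    intro i
    induction i with
    | zero => intro x hx; simpa using hx
    | succ i ih =>
      intro x hx
      rw [Function.iterate_succ_apply]
      exact ih _ (fun h => hx (σ.injective (by rw [h, map_zero])))
  intro D
  induction D with
  | zero =>
    intro c hc V hV
    have hbot : V = ⊥ := by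
      rw [eq_bot_iff]
      intro x hx
      have h := hV x hx
      simp only [zero_add, Finset.sum_range_one, Function.iterate_zero, id_eq] at h
      rcases mul_eq_zero.mp h with h' | h'
      · exact absurd h' hc
      · simpa using h'
    rw [hbot, finrank_bot]
  | succ D ih =>
    intro c hc V hV
    rcases eq_or_ne V ⊥ with hV0 | hV0
    · rw [hV0, finrank_bot]; omega
    obtain ⟨u, huV, hu0⟩ := Submodule.exists_mem_ne_zero_of_ne_bot hV0
    set μ : F →ₗ[K] F := LinearMap.mulLeft K (u⁻¹ : F) with hμ
    have hμapp : ∀ x : F, μ x = u⁻¹ * x := fun x => rfl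
    have hμinj : Function.Injective μ := by
      intro x y h
      rw [hμapp, hμapp] at h
      exact mul_left_cancel₀ (inv_ne_zero hu0) h
    set W := V.map μ with hWdef
    have hfrW : Module.finrank K V = Module.finrank K W :=
      LinearEquiv.finrank_eq (Submodule.equivMapOfInjective μ hμinj V)
    have h1W : (1 : F) ∈ W := ⟨u, huV, by rw [hμapp, inv_mul_cancel₀ hu0]⟩
    set d : ℕ → F := fun i => c i * σ^[i] u with hd
    have hdW : ∀ w ∈ W, ∑ i ∈ Finset.range (D + 2), d i * σ^[i] w = 0 := by
      rintro w ⟨v, hv, rfl⟩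
      have huw : u * μ v = v := by rw [hμapp, mul_inv_cancel_left₀ hu0]
      have := hV v hv
      rw [← huw] at this
      calc ∑ i ∈ Finset.range (D + 2), d i * σ^[i] (μ v)
          = ∑ i ∈ Finset.range (D + 2), c i * σ^[i] (u * μ v) := by
            refine Finset.sum_congr rfl fun i _ => ?_
            rw [hitmul, hd]; ring
        _ = 0 := this
    have hd0 : ∑ i ∈ Finset.range (D + 2), d i = 0 := by
      have := hdW 1 h1W
      simpa [hitone] using this
    have hdtop : d (D + 1) ≠ 0 := mul_ne_zero hc (hitne _ _ hu0)
    set e : ℕ → F := fun i => ∑ j ∈ Finset.Ico (i + 1) (D + 2), d j with he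
    have hetop : e D = d (D + 1) := by
      simp [he, Nat.Ico_succ_singleton]
    have hkey : ∀ x : F,
        ∑ i ∈ Finset.range (D + 1), e i * σ^[i] (σ x - x)
          = ∑ i ∈ Finset.range (D + 2), d i * σ^[i] x := by
      intro x
      have hg' : ∀ i : ℕ, σ^[i] (σ x - x) = σ^[i + 1] x - σ^[i] x := by
        intro i
        rw [hitsub, ← Function.iterate_succ_apply]
      calc ∑ i ∈ Finset.range (D + 1), e i * σ^[i] (σ x - x)
          = ∑ i ∈ Finset.range (D + 1), ∑ j ∈ Finset.Ico (i + 1) (D + 2),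
              d j * (σ^[i + 1] x - σ^[i] x) := by
            refine Finset.sum_congr rfl fun i _ => ?_
            rw [hg', he, Finset.sum_mul]
        _ = ∑ j ∈ Finset.range (D + 2), ∑ i ∈ Finset.range j,
              d j * (σ^[i + 1] x - σ^[i] x) := by
            refine Finset.sum_comm' ?_
            intro i j
            simp only [Finset.mem_range, Finset.mem_Ico]
            omega
        _ = ∑ j ∈ Finset.range (D + 2), d j * (σ^[j] x - x) := by
            refine Finset.sum_congr rfl fun j _ => ?_
            rw [← Finset.mul_sum]
            congr 1
            simpa using Finset.sum_range_sub (fun i => σ^[i] x) j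
        _ = ∑ j ∈ Finset.range (D + 2), d j * σ^[j] x
              - (∑ j ∈ Finset.range (D + 2), d j) * x := by
            rw [Finset.sum_mul, ← Finset.sum_sub_distrib]
            refine Finset.sum_congr rfl fun j _ => ?_
            ring
        _ = ∑ j ∈ Finset.range (D + 2), d j * σ^[j] x := by
            rw [hd0, zero_mul, sub_zero]
    set L : F →ₗ[K] F := σa.toLinearMap - LinearMap.id with hL
    have hLapp : ∀ x : F, L x = σ x - x := fun x => rfl
    set W' := W.map L with hW'def
    have hW'van : ∀ y ∈ W', ∑ i ∈ Finset.range (D + 1), e i * σ^[i] y = 0 := by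
      rintro y ⟨w, hw, rfl⟩
      rw [hLapp, hkey]
      exact hdW w hw
    have hW'rank : Module.finrank K W' ≤ D := ih e (by rw [hetop]; exact hdtop) W' hW'van
    set g : W →ₗ[K] F := L ∘ₗ W.subtype with hgdef
    have hrange : LinearMap.range g = W' := by
      rw [hgdef, LinearMap.range_comp, Submodule.range_subtype]
    have hker : Module.finrank K (LinearMap.ker g) ≤ 1 := by
      set R := LinearMap.range (Algebra.linearMap K F) with hR
      have hRrank : Module.finrank K R ≤ 1 := by
        have := LinearMap.finrank_range_le (Algebra.linearMap K F)
        simpa using this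
      have hmem : ∀ z : LinearMap.ker g, (W.subtype ((LinearMap.ker g).subtype z)) ∈ R := by
        intro z
        have hz : g z.1 = 0 := z.2
        have : σ (z.1 : F) - (z.1 : F) = 0 := hz
        have hfx : σ (z.1 : F) = (z.1 : F) := sub_eq_zero.mp this
        obtain ⟨a, ha⟩ := hfix _ hfx
        exact ⟨a, ha⟩
      set φ : LinearMap.ker g →ₗ[K] R :=
        LinearMap.codRestrict R (W.subtype ∘ₗ (LinearMap.ker g).subtype) hmem with hφ
      have hφinj : Function.Injective φ := by
        intro z w h
        have h2 := Subtype.ext_iff.mp h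
        simp only [hφ, LinearMap.codRestrict_apply, LinearMap.coe_comp,
          Function.comp_apply, Submodule.coe_subtype] at h2
        exact Subtype.ext (Subtype.ext h2)
      exact le_trans (LinearMap.finrank_le_finrank_of_injective hφinj) hRrank
    calc Module.finrank K V = Module.finrank K W := hfrW
      _ = Module.finrank K (LinearMap.range g) + Module.finrank K (LinearMap.ker g) :=
          (LinearMap.finrank_range_add_finrank_ker g).symm
      _ ≤ D + 1 := by
          rw [hrange]
          omega

/-- If `x^{q^s} = x` with `gcd(s,n)=1` and `|F| = q^n`, then `x` lies in (the image of) `K`. -/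
lemma fixed_field_sub {K F : Type*} [Field K] [Fintype K] [Field F] [Fintype F] [Algebra K F]
    (s n : ℕ) (hs : 0 < s) (hn2 : 2 ≤ n) (hgcd : Nat.gcd s n = 1)
    (hcard : Fintype.card F = Fintype.card K ^ n) (x : F)
    (hx : x ^ Fintype.card K ^ s = x) : x ∈ Set.range (algebraMap K F) := by
  classical
  set q := Fintype.card K with hqdef
  have hq1 : 1 < q := Fintype.one_lt_card
  have hiter : ∀ (y : F) (t : ℕ), y ^ q ^ t = y → ∀ u : ℕ, y ^ q ^ (t * u) = y := by
    intro y t hy u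
    induction u with
    | zero => simp
    | succ u ihu =>
      have h1 : q ^ (t * (u + 1)) = q ^ (t * u) * q ^ t := by
        rw [Nat.mul_succ, pow_add]
      calc y ^ q ^ (t * (u + 1)) = (y ^ q ^ (t * u)) ^ q ^ t := by rw [h1, pow_mul]
        _ = y ^ q ^ t := by rw [ihu]
        _ = y := hy
  have hn0 : 0 < n := by omega
  have htot : s ^ n.totient % n = 1 % n := Nat.ModEq.pow_totient hgcd
  have h1n : 1 % n = 1 := Nat.mod_eq_of_lt (by omega)
  set A := s ^ n.totient with hA
  have hAmod : A % n = 1 := by rw [hA, htot, h1n]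
  have hAeq : A = n * (A / n) + 1 := by
    conv_lhs => rw [← Nat.div_add_mod A n]
    rw [hAmod]
  have hsA : s * s ^ (n.totient - 1) = A := by
    rw [hA, ← pow_succ']
    congr 1
    have := Nat.totient_pos.mpr hn0
    omega
  have hxA : x ^ q ^ A = x := by rw [← hsA]; exact hiter x s hx _
  have hxn : x ^ q ^ n = x := by
    have := FiniteField.pow_card x
    rwa [hcard] at this
  have hxnv : x ^ q ^ (n * (A / n)) = x := hiter x n hxn _
  have hxq : x ^ q = x := by
    have h2 : x ^ q ^ (n * (A / n) + 1) = x := by rw [← hAeq]; exact hxA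
    rw [pow_succ, pow_mul, hxnv] at h2
    exact h2
  -- root-counting argument
  set P : F[X] := X ^ q - X with hP
  have hPne : P ≠ 0 := by
    intro h
    have hc : P.coeff 1 = 0 := by rw [h]; simp
    rw [hP] at hc
    rw [coeff_sub, coeff_X_pow, coeff_X_one, if_neg (by omega : ¬(1 = q))] at hc
    simp at hc
  have hdeg : P.natDegree ≤ q := le_trans (natDegree_sub_le _ _) (by simp [natDegree_X_pow, natDegree_X]; omega)
  have himg : (Finset.univ.image (algebraMap K F)) ⊆
      Finset.univ.filter (fun y : F => y ^ q = y) := by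
    intro y hy
    simp only [Finset.mem_image] at hy
    obtain ⟨a, _, rfl⟩ := hy
    simp only [Finset.mem_filter, Finset.mem_univ, true_and]
    rw [← map_pow, hqdef, FiniteField.pow_card]
  have hcards : (Finset.univ.filter (fun y : F => y ^ q = y)).card ≤ q := by
    have hsub : Finset.univ.filter (fun y : F => y ^ q = y) ⊆ P.roots.toFinset := by
      intro y hy
      simp only [Finset.mem_filter, Finset.mem_univ, true_and] at hy
      rw [Multiset.mem_toFinset, mem_roots hPne]
      simp [hP, IsRoot, sub_eq_zero, hy]
    calc (Finset.univ.filter (fun y : F => y ^ q = y)).card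
        ≤ P.roots.toFinset.card := Finset.card_le_card hsub
      _ ≤ Multiset.card P.roots := Multiset.toFinset_card_le _
      _ ≤ P.natDegree := P.card_roots'
      _ ≤ q := hdeg
  have hqcard : (Finset.univ.image (algebraMap K F)).card = q := by
    rw [Finset.card_image_of_injective _ (algebraMap K F).injective, Finset.card_univ]
  have heq := Finset.eq_of_subset_of_card_le himg (by rw [hqcard]; exact hcards)
  have hxmem : x ∈ Finset.univ.filter (fun y : F => y ^ q = y) := by simp [hxq]
  rw [← heq] at hxmem
  simp only [Finset.mem_image] at hxmem
  obtain ⟨a, _, ha⟩ := hxmem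
  exact ⟨a, ha⟩

/-- Let `E` be the largest intermediate field of `F/K` such that the `m`-dimensional
`K`-subspace `U` is an `E`-subspace of `F`. Then the middle nucleus of the projected
Gabidulin code `π_U(G_{k,s})` is `{cX : c ∈ E}`. -/
theorem middle_nucleus_of_gabidulin
    (K F : Type*) [Field K] [Fintype K] [Field F] [Fintype F] [Algebra K F]
    (q k s m n : ℕ) (hq : q = Fintype.card K) (hn : Module.finrank K F = n)
    (hs : 0 < s) (hgcd : Nat.gcd s n = 1) (hk : 0 < k) (hkm : k < m) (hmn : m ≤ n)
    (U : Submodule K F) (hU : Module.finrank K U = m)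
    (E : IntermediateField K F)
    (hE : ∀ c ∈ E, ∀ x ∈ U, c * x ∈ U)
    (hEmax : ∀ E' : IntermediateField K F, (∀ c ∈ E', ∀ x ∈ U, c * x ∈ U) → E' ≤ E) :
    middleNucleus U (Gks q k s F) =
      {ψ : Module.End K U | ∃ c ∈ E, ∀ x : U, (ψ x : F) = c * (x : F)} := by
  classical
  have hn2 : 2 ≤ n := by omega
  have hq2 : 1 < q := by rw [hq]; exact Fintype.one_lt_card
  haveI : FiniteDimensional K F := Module.Finite.of_finite
  have hcardF : Fintype.card F = Fintype.card K ^ n := by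
    rw [← hn]; exact card_eq_pow_finrank
  -- characteristic setup
  obtain ⟨p, hpK⟩ := CharP.exists K
  haveI : CharP K p := hpK
  have hp : p.Prime := CharP.char_is_prime K p
  haveI : Fact p.Prime := ⟨hp⟩
  haveI : CharP F p := charP_of_injective_algebraMap (algebraMap K F).injective p
  obtain ⟨r, -, hcardK⟩ := FiniteField.card K p
  have hqp : q = p ^ (r : ℕ) := by rw [hq]; exact hcardK
  -- the q-power maps as ring homs
  have hρ : ∀ (t : ℕ) (y : F), (iterateFrobenius F p (r * t)) y = y ^ q ^ t := by
    intro t y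
    rw [iterateFrobenius_def, hqp, ← pow_mul]
  set σ : F →+* F := iterateFrobenius F p (r * s) with hσdef
  have hσ : ∀ y : F, σ y = y ^ q ^ s := hρ s
  have hσit : ∀ (i : ℕ) (y : F), σ^[i] y = y ^ q ^ (s * i) := by
    intro i y
    rw [hσdef, coe_iterateFrobenius, ← Function.iterate_mul, iterate_frobenius]
    congr 1
    rw [hqp, ← pow_mul, mul_assoc]
  -- σ fixes exactly K
  have hKfix : ∀ (a : K) (t : ℕ), a ^ q ^ t = a := by
    intro a t
    induction t with
    | zero => simp
    | succ t iht =>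
      rw [pow_succ, pow_mul, iht, hq, FiniteField.pow_card]
  have hfix' : ∀ a : K, σ (algebraMap K F a) = algebraMap K F a := by
    intro a
    rw [hσ, ← map_pow, hKfix]
  have hfixto : ∀ x : F, σ x = x → x ∈ Set.range (algebraMap K F) := by
    intro x hxfix
    refine fixed_field_sub s n hs hn2 hgcd hcardF x ?_
    rw [← hq, ← hσ]
    exact hxfix
  -- evaluation of indicator polynomials and general elements
  have hGmem : ∀ v : Fin k → F,
      (∑ i : Fin k, C (v i) * X ^ q ^ (s * (i : ℕ))) ∈ Gks q k s F := fun v => ⟨v, rfl⟩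
  have hext : ∀ (v : Fin k → F) (y : F),
      (∑ i : Fin k, C (v i) * X ^ q ^ (s * (i : ℕ))).eval y
        = ∑ t ∈ Finset.range k, (if h : t < k then v ⟨t, h⟩ else 0) * y ^ q ^ (s * t) := by
    intro v y
    rw [eval_finset_sum, Finset.sum_range]
    refine Finset.sum_congr rfl fun i _ => ?_
    simp [i.isLt]
  have hGeval : ∀ (i0 : Fin k) (y : F),
      (∑ i : Fin k, C (if i = i0 then (1:F) else 0) * X ^ q ^ (s * (i : ℕ))).eval y
        = y ^ q ^ (s * (i0 : ℕ)) := by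
    intro i0 y
    rw [eval_finset_sum, Finset.sum_eq_single i0]
    · simp
    · intro b _ hb; simp [hb]
    · intro h; exact absurd (Finset.mem_univ i0) h
  ext ψ
  simp only [middleNucleus, Set.mem_setOf_eq]
  constructor
  · -- hard direction
    intro hmem
    obtain ⟨g0, ⟨b, rfl⟩, hg0⟩ := hmem _ (hGmem (fun i => if i = ⟨0, hk⟩ then (1:F) else 0))
    set b' : ℕ → F := fun t => if h : t < k then b ⟨t, h⟩ else 0 with hb'
    have hψeval : ∀ x : U, (ψ x : F) = ∑ t ∈ Finset.range k, b' t * (x : F) ^ q ^ (s * t) := by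
      intro x
      have h1 := hg0 x
      rw [hGeval, hext] at h1
      rw [show s * ((⟨0, hk⟩ : Fin k) : ℕ) = 0 from by simp, pow_zero, pow_one] at h1
      exact h1
    by_cases hcase : ∀ t, t ≠ 0 → b' t = 0
    · -- ψ is scalar multiplication by b' 0
      have hψx : ∀ x : U, (ψ x : F) = b' 0 * (x : F) := by
        intro x
        rw [hψeval x, Finset.sum_eq_single 0]
        · simp
        · intro t _ ht; simp [hcase t ht]
        · intro h; exact absurd (Finset.mem_range.mpr hk) h
      -- the stabilizer of U is an intermediate field
      set S : Subalgebra K F :=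
        { carrier := {c : F | ∀ y ∈ U, c * y ∈ U}
          mul_mem' := fun ha hb y hy => by
            rw [mul_assoc]; exact ha _ (hb _ hy)
          add_mem' := fun ha hb y hy => by
            rw [add_mul]; exact U.add_mem (ha _ hy) (hb _ hy)
          one_mem' := fun y hy => by rwa [one_mul]
          zero_mem' := fun y hy => by rw [zero_mul]; exact U.zero_mem
          algebraMap_mem' := fun a y hy => by
            rw [← Algebra.smul_def]; exact U.smul_mem a hy } with hS
      have hSinv : ∀ c ∈ S, c⁻¹ ∈ S := by
        intro c hc
        rcases eq_or_ne c 0 with rfl | hc0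
        · rw [inv_zero]; exact hc
        intro y hy
        haveI : Finite U := Subtype.finite
        have hinj : Function.Injective (fun z : U => (⟨c * z, hc _ z.2⟩ : U)) := by
          intro z w h
          have h2 : c * (z : F) = c * (w : F) := congrArg Subtype.val h
          exact Subtype.ext (mul_left_cancel₀ hc0 h2)
        have hsurj := Finite.injective_iff_surjective.mp hinj
        obtain ⟨z, hz⟩ := hsurj ⟨y, hy⟩
        have hz2 : c * (z : F) = y := congrArg Subtype.val hz
        have : (z : F) = c⁻¹ * y := by rw [← hz2, inv_mul_cancel_left₀ hc0]
        rw [← this]; exact z.2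
      have hb0S : b' 0 ∈ S := by
        intro y hy
        have := hψx ⟨y, hy⟩
        rw [← this]
        exact (ψ ⟨y, hy⟩).2
      have hle : S.toIntermediateField hSinv ≤ E :=
        hEmax _ (fun c hc x hx => hc x hx)
      exact ⟨b' 0, hle hb0S, hψx⟩
    · -- impossible: contradiction with the kernel bound
      exfalso
      push_neg at hcase
      obtain ⟨t0, ht0, hbt0⟩ := hcase
      have ht0k : t0 < k := by
        by_contra hh
        exact hbt0 (by simp [hb', hh])
      set Ds := (Finset.range k).filter (fun t => t ≠ 0 ∧ b' t ≠ 0) with hDs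
      have hne : Ds.Nonempty := ⟨t0, by simp [hDs, Finset.mem_filter, ht0k, ht0, hbt0]⟩
      set d := Ds.max' hne with hdd
      have hdmem : d ∈ Ds := Finset.max'_mem _ _
      have hdmem' : d < k ∧ d ≠ 0 ∧ b' d ≠ 0 := by
        rw [hDs] at hdmem
        simpa using hdmem
      obtain ⟨hdk, hd0, hbd⟩ := hdmem'
      have hdmax : ∀ t, d < t → b' t = 0 := by
        intro t ht
        by_contra h
        have htk : t < k := by
          by_contra hh
          exact h (by simp [hb', hh])
        have ht0' : t ≠ 0 := by omega
        have hle : t ≤ d := Finset.le_max' Ds t (by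
          rw [hDs]
          simp only [Finset.mem_filter, Finset.mem_range]
          exact ⟨htk, ht0', h⟩)
        omega
      set j := k - d with hj
      have hj1 : 1 ≤ j := by omega
      have hjk : j < k := by omega
      obtain ⟨g1, ⟨cc, rfl⟩, hg1⟩ := hmem _ (hGmem (fun i => if i = ⟨j, hjk⟩ then (1:F) else 0))
      set c' : ℕ → F := fun t => if h : t < k then cc ⟨t, h⟩ else 0 with hc'
      have hh1 : ∀ x : U, (ψ x : F) ^ q ^ (s * j)
          = ∑ t ∈ Finset.range k, c' t * (x : F) ^ q ^ (s * t) := by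
        intro x
        have h1 := hg1 x
        rw [hGeval, hext] at h1
        exact h1
      have hexpand : ∀ y : F,
          (∑ t ∈ Finset.range k, b' t * y ^ q ^ (s * t)) ^ q ^ (s * j)
            = ∑ t ∈ Finset.range k, (b' t) ^ q ^ (s * j) * y ^ q ^ (s * (t + j)) := by
        intro y
        rw [← hρ, map_sum]
        refine Finset.sum_congr rfl fun t _ => ?_
        rw [map_mul, hρ, hρ, ← pow_mul, ← pow_add]
        congr 2
        ring
      have hq0 : q ^ (s * j) ≠ 0 := (Nat.pow_pos (by omega)).ne'
      have htrunc : ∀ y : F,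
          ∑ t ∈ Finset.range k, (b' t) ^ q ^ (s * j) * y ^ q ^ (s * (t + j))
            = ∑ t ∈ Finset.range (d + 1), (b' t) ^ q ^ (s * j) * y ^ q ^ (s * (t + j)) := by
        intro y
        symm
        apply Finset.sum_subset (Finset.range_subset_range.mpr (by omega))
        intro t ht ht'
        simp only [Finset.mem_range] at ht ht'
        rw [hdmax t (by omega), zero_pow hq0, zero_mul]
      set Cc : ℕ → F :=
        fun t => (if j ≤ t then (b' (t - j)) ^ q ^ (s * j) else 0) - c' t with hCc
      have hCk : Cc k ≠ 0 := by
        rw [hCc]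
        simp only
        rw [if_pos (by omega : j ≤ k)]
        have h2 : c' k = 0 := by simp [hc']
        rw [h2, sub_zero, show k - j = d from by omega]
        exact pow_ne_zero _ hbd
      have hvan : ∀ x ∈ U, ∑ i ∈ Finset.range (k + 1), Cc i * σ^[i] x = 0 := by
        intro x hx
        have hstep : ∀ i ∈ Finset.range (k + 1), Cc i * σ^[i] x = Cc i * x ^ q ^ (s * i) :=
          fun i _ => by rw [hσit]
        rw [Finset.sum_congr rfl hstep]
        have hmain : (ψ ⟨x, hx⟩ : F) ^ q ^ (s * j)
            = ∑ t ∈ Finset.range k, c' t * x ^ q ^ (s * t) := hh1 ⟨x, hx⟩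
        have hlhs : (ψ ⟨x, hx⟩ : F) ^ q ^ (s * j)
            = ∑ t ∈ Finset.range (d + 1), (b' t) ^ q ^ (s * j) * x ^ q ^ (s * (t + j)) := by
          rw [hψeval ⟨x, hx⟩]
          exact (hexpand x).trans (htrunc x)
        have hdiff : ∑ t ∈ Finset.range (d + 1), (b' t) ^ q ^ (s * j) * x ^ q ^ (s * (t + j))
            - ∑ t ∈ Finset.range k, c' t * x ^ q ^ (s * t) = 0 :=
          sub_eq_zero.mpr (hlhs.symm.trans hmain)
        calc ∑ i ∈ Finset.range (k + 1), Cc i * x ^ q ^ (s * i)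
            = (∑ i ∈ Finset.range (k + 1),
                (if j ≤ i then (b' (i - j)) ^ q ^ (s * j) else 0) * x ^ q ^ (s * i))
              - ∑ i ∈ Finset.range (k + 1), c' i * x ^ q ^ (s * i) := by
              rw [← Finset.sum_sub_distrib]
              refine Finset.sum_congr rfl fun i _ => ?_
              rw [hCc]
              ring
          _ = (∑ t ∈ Finset.range (d + 1), (b' t) ^ q ^ (s * j) * x ^ q ^ (s * (t + j)))
              - ∑ t ∈ Finset.range k, c' t * x ^ q ^ (s * t) := by
              congr 1
              · simp only [ite_mul, zero_mul]
                rw [← Finset.sum_filter]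
                have hfil : (Finset.range (k + 1)).filter (fun i => j ≤ i)
                    = Finset.Ico j (k + 1) := by
                  ext t
                  simp only [Finset.mem_filter, Finset.mem_range, Finset.mem_Ico]
                  omega
                rw [hfil, Finset.sum_Ico_eq_sum_range, show k + 1 - j = d + 1 from by omega]
                refine Finset.sum_congr rfl fun i _ => ?_
                rw [show j + i - j = i from by omega, show j + i = i + j from by omega]
              · rw [Finset.sum_range_succ, show c' k = 0 from by simp [hc'],
                  zero_mul, add_zero]
          _ = 0 := hdiff
      have hfd := twisted_kernel_bound σ hfixto hfix' k Cc hCk U hvan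
      rw [hU] at hfd
      omega
  · rintro ⟨c, hcE, hψ⟩ f hf
    obtain ⟨a, rfl⟩ := hf
    refine ⟨∑ i : Fin k, C (a i * c ^ q ^ (s * (i : ℕ))) * X ^ q ^ (s * (i : ℕ)),
      hGmem _, ?_⟩
    intro x
    rw [hψ]
    simp only [eval_finset_sum, eval_mul, eval_C, eval_pow, eval_X]
    refine Finset.sum_congr rfl fun i _ => ?_
    rw [mul_pow]
    ring
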